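/- The field extension Q(√13)/Q is cyclotomic in the sense that Q(√13) ⊆ Q(ζ₁₃), but the field Q(λ_0) with λ_0 = i√((−1+√13)/6) satisfies Q(√13) ⊊ Q(λ_0) and Q(λ_0) is not contained in Q(ζ_n) for any n. -/

import Mathlib

open IntermediateField Polynomial

/-- `λ₀ = i·√((−1 + √13)/6)`. -/
noncomputable def lambda0 : ℂ := Complex.I * Real.sqrt ((-1 + Real.sqrt 13) / 6)

lemma one_lt_sqrt13 : (1:ℝ) < Real.sqrt 13 := by
  rw [show (1:ℝ) = Real.sqrt 1 by simp]
  exact Real.sqrt_lt_sqrt (by norm_num) (by norm_num)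

lemma arg_nonneg : (0:ℝ) ≤ (-1 + Real.sqrt 13) / 6 := by
  have := one_lt_sqrt13; linarith

lemma lambda0_sq : lambda0 ^ 2 = (1 - ((Real.sqrt 13 : ℝ) : ℂ)) / 6 := by
  have h : ((Real.sqrt ((-1 + Real.sqrt 13) / 6) : ℝ) : ℂ) ^ 2
      = (((-1 + Real.sqrt 13) / 6 : ℝ) : ℂ) := by
    rw [← Complex.ofReal_pow, Real.sq_sqrt arg_nonneg]
  unfold lambda0
  rw [mul_pow, Complex.I_sq, h]
  push_cast
  ring

lemma conj_lambda0 : (starRingEnd ℂ) lambda0 = -lambda0 := by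
  unfold lambda0
  rw [map_mul, Complex.conj_I, Complex.conj_ofReal]; ring

lemma irr13 : Irreducible (X ^ 2 - C (13 : ℚ)) := by
  apply X_pow_sub_C_irreducible_of_prime Nat.prime_two
  intro b hb
  have h13 : Irrational (Real.sqrt 13) := by
    simpa using (by norm_num : Nat.Prime 13).irrational_sqrt
  have hb' : ((b:ℝ))^2 = 13 := by exact_mod_cast congrArg (Rat.cast : ℚ → ℝ) hb
  have heq : Real.sqrt 13 = ((|b| : ℚ) : ℝ) := by
    rw [← hb', Real.sqrt_sq_eq_abs]; push_cast; ring
  exact Rat.not_irrational |b| (heq ▸ h13)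

lemma sqrt13_sq : (((Real.sqrt 13 : ℝ)) : ℂ) ^ 2 = 13 := by
  norm_cast
  exact Real.sq_sqrt (by norm_num)

lemma minpoly_sqrt13 : minpoly ℚ (((Real.sqrt 13 : ℝ)):ℂ) = X ^ 2 - C (13:ℚ) := by
  refine (minpoly.eq_of_irreducible_of_monic irr13 ?_ (monic_X_pow_sub_C _ two_ne_zero)).symm
  simp only [map_sub, map_pow, aeval_X, aeval_C, map_ofNat]
  linear_combination sqrt13_sq

lemma minpoly_neg_sqrt13 : minpoly ℚ (-(((Real.sqrt 13 : ℝ)):ℂ)) = X ^ 2 - C (13:ℚ) := by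
  refine (minpoly.eq_of_irreducible_of_monic irr13 ?_ (monic_X_pow_sub_C _ two_ne_zero)).symm
  simp only [map_sub, map_pow, aeval_X, aeval_C, map_ofNat]
  linear_combination sqrt13_sq

lemma sqrt13_mem_cyc : (((Real.sqrt 13 : ℝ)):ℂ) ∈
    IntermediateField.adjoin ℚ ({Complex.exp (2 * Real.pi * Complex.I / 13)} : Set ℂ) := by
  set z := Complex.exp (2 * Real.pi * Complex.I / 13) with hzdef
  set K := IntermediateField.adjoin ℚ ({z} : Set ℂ) with hKdef
  have hprim : IsPrimitiveRoot z 13 := by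
    have h := Complex.isPrimitiveRoot_exp 13 (by norm_num)
    norm_num at h
    exact h
  have hgeom : ∑ i ∈ Finset.range 13, z ^ i = 0 := hprim.geom_sum_eq_zero (by norm_num)
  have hgeom' : 1 + z + z^2 + z^3 + z^4 + z^5 + z^6 + z^7 + z^8 + z^9 + z^10 + z^11 + z^12
      = 0 := by
    rw [show (13:ℕ) = 12 + 1 by rfl] at hgeom
    simp only [Finset.sum_range_succ, Finset.sum_range_zero, zero_add, pow_zero, pow_one]
      at hgeom
    linear_combination hgeom
  set g := z + z^3 + z^4 + z^9 + z^10 + z^12 - z^2 - z^5 - z^6 - z^7 - z^8 - z^11 with hgdef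
  have hkey : g ^ 2 = 13 := by
    rw [hgdef]
    linear_combination (-13 + 13*z + z^2 - 3*z^3 + 5*z^4 - 3*z^5 - 3*z^6 + 5*z^7 - 3*z^8
      - 3*z^9 + 5*z^10 - 3*z^11 + z^12) * hgeom'
  have hzK : z ∈ K := mem_adjoin_simple_self ℚ z
  have hgK : g ∈ K := by
    rw [hgdef]
    repeat'
      first
      | exact hzK
      | exact pow_mem hzK _
      | apply sub_mem
      | apply add_mem
  have hsplit : ((((Real.sqrt 13 : ℝ)):ℂ) - g) * ((((Real.sqrt 13 : ℝ)):ℂ) + g) = 0 := by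
    linear_combination sqrt13_sq - hkey
  rcases mul_eq_zero.1 hsplit with h | h
  · rw [sub_eq_zero] at h
    exact h ▸ hgK
  · have : (((Real.sqrt 13 : ℝ)):ℂ) = -g := by linear_combination h
    exact this ▸ neg_mem hgK

lemma sqrt13_mem_lambda : (((Real.sqrt 13 : ℝ)):ℂ) ∈
    IntermediateField.adjoin ℚ ({lambda0} : Set ℂ) := by
  have hlam : lambda0 ∈ IntermediateField.adjoin ℚ ({lambda0} : Set ℂ) :=
    mem_adjoin_simple_self ℚ lambda0
  have h : (((Real.sqrt 13 : ℝ)):ℂ) = 1 - 6 * lambda0 ^ 2 := by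
    rw [lambda0_sq]; ring
  have h6p : (6:ℂ) ∈ IntermediateField.adjoin ℚ ({lambda0} : Set ℂ) := by
    have h6p' := _root_.natCast_mem (IntermediateField.adjoin ℚ ({lambda0} : Set ℂ)) 6
    simp only [Nat.cast_ofNat] at h6p'
    exact h6p'
  rw [h]
  exact sub_mem (one_mem _) (mul_mem h6p (pow_mem hlam 2))

set_option maxHeartbeats 1000000 in
set_option synthInstance.maxHeartbeats 400000 in
lemma part3 (n : ℕ) (ζ : ℂ) (hn : 0 < n) (hζ : IsPrimitiveRoot ζ n) :
    ¬ IntermediateField.adjoin ℚ ({lambda0} : Set ℂ)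
        ≤ IntermediateField.adjoin ℚ ({ζ} : Set ℂ) := by
  intro hle
  set K := IntermediateField.adjoin ℚ ({ζ} : Set ℂ) with hKdef
  have hζ' : IsPrimitiveRoot ζ (((⟨n, hn⟩ : ℕ+)) : ℕ) := hζ
  have hint : IsIntegral ℚ ζ := ⟨X ^ n - 1, monic_X_pow_sub_C 1 hn.ne', by
    simp [hζ.pow_eq_one]⟩
  haveI : NeZero n := ⟨hn.ne'⟩
  haveI hcyc : IsCyclotomicExtension {n} ℚ K := by
    have H := IntermediateField.adjoin_simple_toSubalgebra_of_isAlgebraic hint.isAlgebraic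
    refine IsCyclotomicExtension.equiv _ _ _ (h := ?_) (.refl : K.toSubalgebra ≃ₐ[ℚ] _)
    rw [show K.toSubalgebra = Algebra.adjoin ℚ {ζ} from H]
    exact hζ'.adjoin_isCyclotomicExtension ℚ
  haveI hgal : IsGalois ℚ ↥K := IsCyclotomicExtension.isGalois (S := {n}) (K := ℚ) (L := ↥K)
  haveI hfd : FiniteDimensional ℚ K := IntermediateField.adjoin.finiteDimensional hint
  have hζK : ζ ∈ K := mem_adjoin_simple_self ℚ ζ
  have hs13K : (((Real.sqrt 13 : ℝ)):ℂ) ∈ K := hle sqrt13_mem_lambda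
  have hlamK : lambda0 ∈ K := hle (mem_adjoin_simple_self ℚ lambda0)
  set x13 : K := ⟨_, hs13K⟩ with hx13def
  set lamK : K := ⟨lambda0, hlamK⟩ with hlamKdef
  -- the conjugation automorphism of K
  have hconjζ : (starRingEnd ℂ) ζ = ζ⁻¹ := by
    have hnorm : ‖ζ‖ = 1 :=
      Complex.norm_eq_one_of_pow_eq_one hζ.pow_eq_one hn.ne'
    have h1 : (starRingEnd ℂ) ζ * ζ = 1 := by
      rw [mul_comm, Complex.mul_conj]
      norm_cast
      rw [Complex.normSq_eq_norm_sq, hnorm]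
      norm_num
    exact eq_inv_of_mul_eq_one_left h1
  let cj : ℂ →ₐ[ℚ] ℂ := (Complex.conjAe.restrictScalars ℚ).toAlgHom
  have hmapK : ∀ w ∈ K, (starRingEnd ℂ) w ∈ K := by
    intro w hw
    have hmap : K.map cj ≤ K := by
      rw [hKdef, IntermediateField.adjoin_map]
      have himg : cj '' {ζ} = {ζ⁻¹} := by
        rw [Set.image_singleton, show cj ζ = ζ⁻¹ from hconjζ]
      rw [himg, IntermediateField.adjoin_le_iff]
      exact Set.singleton_subset_iff.2 (inv_mem hζK)
    exact hmap ⟨w, hw, rfl⟩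
  let c1 : K →ₐ[ℚ] K := (cj.comp K.val).codRestrict K.toSubalgebra (fun x => hmapK _ x.2)
  let c : K ≃ₐ[ℚ] K := AlgEquiv.ofBijective c1 c1.bijective
  have hcval : ∀ y : K, (↑(c y) : ℂ) = (starRingEnd ℂ) ↑y := fun y => rfl
  -- the automorphism sending √13 to -√13
  have hix : IsIntegral ℚ x13 := IsIntegral.of_finite ℚ x13
  have hix' : IsIntegral ℚ (-x13) := IsIntegral.of_finite ℚ (-x13)
  have hvalinj : Function.Injective (K.val) := Subtype.coe_injective
  have hmx : minpoly ℚ x13 = X ^ 2 - C (13:ℚ) := by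
    erw [← minpoly.algHom_eq K.val hvalinj x13]
    exact minpoly_sqrt13
  have hmx' : minpoly ℚ (-x13) = X ^ 2 - C (13:ℚ) := by
    erw [← minpoly.algHom_eq K.val hvalinj (-x13), map_neg]
    exact minpoly_neg_sqrt13
  let pb1 := IntermediateField.adjoin.powerBasis hix
  let pb2 := IntermediateField.adjoin.powerBasis hix'
  have hgeneq : minpoly ℚ pb1.gen = minpoly ℚ pb2.gen := by
    rw [IntermediateField.adjoin.powerBasis_gen, IntermediateField.adjoin.powerBasis_gen]
    exact (IntermediateField.minpoly_gen (F := ℚ) (α := x13)).trans (hmx.trans (hmx'.symm.trans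
      (IntermediateField.minpoly_gen (F := ℚ) (α := -x13)).symm))
  let e := pb1.equivOfMinpoly pb2 hgeneq
  let σ := e.liftNormal K
  have hσx : σ x13 = -x13 := by
    have h1 : algebraMap _ (↥K) (IntermediateField.AdjoinSimple.gen ℚ x13) = x13 :=
      IntermediateField.AdjoinSimple.algebraMap_gen ℚ x13
    rw [← h1, AlgEquiv.liftNormal_commutes]
    have h2 : e (IntermediateField.AdjoinSimple.gen ℚ x13)
        = IntermediateField.AdjoinSimple.gen ℚ (-x13) := by
      have h3 := pb1.equivOfMinpoly_gen pb2 hgeneq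
      simpa [pb1, pb2, IntermediateField.adjoin.powerBasis_gen] using h3
    rw [h2]
    exact IntermediateField.AdjoinSimple.algebraMap_gen ℚ (-x13)
  -- commutativity of the Galois group
  have hcomm : c * σ = σ * c :=
    (IsCyclotomicExtension.isMulCommutative (S := {n}) (A := ℚ) (B := K)).is_comm.comm c σ
  -- computations
  set y := σ lamK with hydef
  have hcoe6 : ((algebraMap ℚ (↥K) 6 : ↥K) : ℂ) = 6 := by
    have h := (IsScalarTower.algebraMap_apply ℚ (↥K) ℂ (6:ℚ)).symm
    simpa using h
  have hl2 : algebraMap ℚ (↥K) 6 * lamK ^ 2 = 1 - x13 := by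
    apply Subtype.ext
    push_cast [hcoe6]
    rw [lambda0_sq]
    ring
  have hy2 : algebraMap ℚ (↥K) 6 * y ^ 2 = 1 + x13 := by
    have h4 := congrArg σ hl2
    simp only [map_mul, map_pow, map_sub, map_one, AlgEquiv.commutes, hσx] at h4
    rw [hydef]
    rw [h4]
    ring
  have hw2 : (6:ℂ) * (↑y:ℂ) ^ 2 = 1 + ((Real.sqrt 13:ℝ):ℂ) := by
    have h5 := Subtype.ext_iff.mp hy2
    push_cast [hcoe6] at h5
    linear_combination h5
  -- y is real
  have him : (↑y:ℂ).im = 0 := by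
    set w := (↑y : ℂ) with hwdef
    have h6 : w ^ 2 = (((1 + Real.sqrt 13) / 6 : ℝ) : ℂ) := by
      push_cast
      linear_combination hw2 / 6
    have h7 : w.re * w.im = 0 := by
      have := congrArg Complex.im h6
      simp only [Complex.ofReal_im, pow_two, Complex.mul_im] at this
      linarith
    have h8 : w.re * w.re - w.im * w.im = (1 + Real.sqrt 13) / 6 := by
      have := congrArg Complex.re h6
      simpa [pow_two, Complex.mul_re] using this
    rcases mul_eq_zero.1 h7 with h | h
    · exfalso
      have hpos : 0 < (1 + Real.sqrt 13) / 6 := by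
        have := Real.sqrt_nonneg 13; linarith
      nlinarith [mul_self_nonneg w.im, mul_self_nonneg w.re]
    · exact h
  have hcy : c y = y := by
    apply Subtype.ext
    rw [hcval y]
    exact Complex.conj_eq_iff_im.2 him
  have hclam : c lamK = -lamK := by
    apply Subtype.ext
    rw [hcval lamK]
    push_cast
    exact conj_lambda0
  -- derive the contradiction
  have h9 : c (σ lamK) = σ (c lamK) := by
    have := congrArg (fun t => t lamK) hcomm
    simpa [AlgEquiv.mul_apply] using this
  rw [← hydef, hcy, hclam, map_neg, ← hydef] at h9
  -- y = -y
  have hy0 : (↑y : ℂ) = 0 := by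
    have h10 := Subtype.ext_iff.mp h9
    push_cast at h10
    linear_combination h10 / 2
  rw [hy0] at hw2
  have := Real.sqrt_nonneg 13
  have h11 : (0:ℝ) = 1 + Real.sqrt 13 := by
    have := congrArg Complex.re hw2
    simpa using this
  linarith

noncomputable def realField : IntermediateField ℚ ℂ :=
  Subfield.toIntermediateField Complex.ofRealHom.fieldRange
    (fun x => ⟨(x:ℝ), by simp⟩)

lemma im_eq_zero_of_mem_realField {z : ℂ} (h : z ∈ realField) : z.im = 0 := by
  obtain ⟨r, hr⟩ := h
  rw [← hr]
  simp [Complex.ofRealHom]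

lemma lambda0_im_pos : 0 < lambda0.im := by
  have h1 : lambda0.im = Real.sqrt ((-1 + Real.sqrt 13) / 6) := by
    simp [lambda0]
  rw [h1]
  apply Real.sqrt_pos.2
  have := one_lt_sqrt13
  linarith

/-- `ℚ(√13) ⊆ ℚ(ζ₁₃)`, but `ℚ(√13) ⊊ ℚ(λ₀)` and `ℚ(λ₀)` is not contained in any
cyclotomic field `ℚ(ζₙ)`. -/
theorem sqrt13_cyclotomic_but_lambda0_not :
    IntermediateField.adjoin ℚ ({((Real.sqrt 13 : ℝ) : ℂ)} : Set ℂ)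
      ≤ IntermediateField.adjoin ℚ
          ({Complex.exp (2 * Real.pi * Complex.I / 13)} : Set ℂ) ∧
    IntermediateField.adjoin ℚ ({((Real.sqrt 13 : ℝ) : ℂ)} : Set ℂ)
      < IntermediateField.adjoin ℚ ({lambda0} : Set ℂ) ∧
    ∀ (n : ℕ) (ζ : ℂ), 0 < n → IsPrimitiveRoot ζ n →
      ¬ IntermediateField.adjoin ℚ ({lambda0} : Set ℂ)
          ≤ IntermediateField.adjoin ℚ ({ζ} : Set ℂ) := by
  refine ⟨?_, ?_, fun n ζ hn hζ => part3 n ζ hn hζ⟩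
  · rw [IntermediateField.adjoin_le_iff]
    exact Set.singleton_subset_iff.2 sqrt13_mem_cyc
  · have hsub : IntermediateField.adjoin ℚ ({((Real.sqrt 13 : ℝ) : ℂ)} : Set ℂ)
        ≤ IntermediateField.adjoin ℚ ({lambda0} : Set ℂ) := by
      rw [IntermediateField.adjoin_le_iff]
      exact Set.singleton_subset_iff.2 sqrt13_mem_lambda
    refine lt_of_le_of_ne hsub (fun heq => ?_)
    have hlam : lambda0 ∈ IntermediateField.adjoin ℚ ({((Real.sqrt 13:ℝ):ℂ)} : Set ℂ) := by
      rw [heq]; exact mem_adjoin_simple_self ℚ lambda0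
    have hle : IntermediateField.adjoin ℚ ({((Real.sqrt 13:ℝ):ℂ)} : Set ℂ) ≤ realField := by
      rw [IntermediateField.adjoin_le_iff]
      exact Set.singleton_subset_iff.2 ⟨Real.sqrt 13, rfl⟩
    have := im_eq_zero_of_mem_realField (hle hlam)
    have := lambda0_im_pos
    linarith
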